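/- Let U ⊆ ℝⁿ be open and let f : U → ℝⁿ be three times continuously differentiable with invertible Jacobian matrix J(x) = (∂_i f^k(x)) at every x ∈ U. Define Φ^k_{ij}(x) := Σ_m (J(x)⁻¹)^k_m · ∂_i∂_j f^m(x), so that Σ_r (∂_r f^k)·Φ^r_{ij} = ∂_i∂_j f^k. Then the Vessiot structure equations of the affine structure hold: ∂_i Φ^k_{lj} − ∂_j Φ^k_{li} + Σ_r (Φ^r_{lj} Φ^k_{ri} − Φ^r_{li} Φ^k_{rj}) = 0 on U for all i, j, k, l. -/

import Mathlib

open Filter Topology Matrix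

/-- Partial derivative in the `i`-th coordinate direction of a function on `ℝⁿ`. -/
noncomputable def pd {n : ℕ} (i : Fin n) (f : (Fin n → ℝ) → ℝ) (x : Fin n → ℝ) : ℝ :=
  fderiv ℝ f x (Pi.single i 1)

section Aux

variable {n : ℕ}

lemma pd_congr {i : Fin n} {F G : (Fin n → ℝ) → ℝ} {x : Fin n → ℝ} (h : F =ᶠ[𝓝 x] G) :
    pd i F x = pd i G x := by
  unfold pd; rw [h.fderiv_eq]

lemma pd_sum {i : Fin n} {ι : Type*} (s : Finset ι) {F : ι → (Fin n → ℝ) → ℝ} {x : Fin n → ℝ}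
    (h : ∀ r ∈ s, DifferentiableAt ℝ (F r) x) :
    pd i (fun y => ∑ r ∈ s, F r y) x = ∑ r ∈ s, pd i (F r) x := by
  unfold pd; rw [fderiv_fun_sum h]; simp

lemma pd_mul {i : Fin n} {a b : (Fin n → ℝ) → ℝ} {x : Fin n → ℝ}
    (ha : DifferentiableAt ℝ a x) (hb : DifferentiableAt ℝ b x) :
    pd i (fun y => a y * b y) x = pd i a x * b x + a x * pd i b x := by
  unfold pd; rw [fderiv_fun_mul ha hb]
  simp only [ContinuousLinearMap.add_apply, ContinuousLinearMap.smul_apply, smul_eq_mul]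
  ring

lemma pd_pd_eq_fderiv2 {h : (Fin n → ℝ) → ℝ} {x : Fin n → ℝ}
    (hd : DifferentiableAt ℝ (fderiv ℝ h) x) (i j : Fin n) :
    pd i (fun z => pd j h z) x
      = fderiv ℝ (fderiv ℝ h) x (Pi.single i 1) (Pi.single j 1) := by
  unfold pd
  rw [fderiv_clm_apply hd (differentiableAt_const _)]
  simp

lemma pd_comm {h : (Fin n → ℝ) → ℝ} {x : Fin n → ℝ} (hh : ContDiffAt ℝ 2 h x) (i j : Fin n) :
    pd i (fun z => pd j h z) x = pd j (fun z => pd i h z) x := by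
  have hd : DifferentiableAt ℝ (fderiv ℝ h) x :=
    (hh.fderiv_right (m := 1) le_rfl).differentiableAt one_ne_zero
  rw [pd_pd_eq_fderiv2 hd, pd_pd_eq_fderiv2 hd]
  exact (hh.isSymmSndFDerivAt (by simp)) _ _

lemma differentiableAt_det {N : ℕ} {A : (Fin n → ℝ) → Matrix (Fin N) (Fin N) ℝ} {x : Fin n → ℝ}
    (hA : ∀ k l, DifferentiableAt ℝ (fun y => A y k l) x) :
    DifferentiableAt ℝ (fun y => (A y).det) x := by
  simp only [Matrix.det_apply']
  refine DifferentiableAt.fun_sum fun σ _ => DifferentiableAt.const_mul ?_ _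
  exact (HasFDerivAt.finset_prod (fun i _ => (hA (σ i) i).hasFDerivAt)).differentiableAt

lemma differentiableAt_adjugate {N : ℕ} {A : (Fin n → ℝ) → Matrix (Fin N) (Fin N) ℝ}
    {x : Fin n → ℝ} (hA : ∀ k l, DifferentiableAt ℝ (fun y => A y k l) x) (k m : Fin N) :
    DifferentiableAt ℝ (fun y => (A y).adjugate k m) x := by
  simp only [Matrix.adjugate_apply]
  apply differentiableAt_det
  intro a b
  simp only [Matrix.updateRow_apply]
  by_cases h : a = m
  · simp [h]
  · simpa [h] using hA a b

lemma differentiableAt_inv_entry {N : ℕ} {A : (Fin n → ℝ) → Matrix (Fin N) (Fin N) ℝ}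
    {x : Fin n → ℝ} (hA : ∀ k l, DifferentiableAt ℝ (fun y => A y k l) x)
    (hdet : (A x).det ≠ 0) (k m : Fin N) :
    DifferentiableAt ℝ (fun y => (A y)⁻¹ k m) x := by
  have hrw : (fun y => (A y)⁻¹ k m) = fun y => ((A y).det)⁻¹ * (A y).adjugate k m := by
    funext y
    rw [Matrix.inv_def, Matrix.smul_apply, Ring.inverse_eq_inv', smul_eq_mul]
  rw [hrw]
  exact ((differentiableAt_det hA).inv hdet).mul (differentiableAt_adjugate hA k m)

end Aux

/-- For a `C³` map `f : U → ℝⁿ` on an open `U ⊆ ℝⁿ` with everywhere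
invertible Jacobian `J(x) = (∂_i f^k(x))`, the invariants
`Φ^k_{ij} = Σ_m (J⁻¹)^k_m ∂_i∂_j f^m` satisfy `Σ_r (∂_r f^k)·Φ^r_{ij} = ∂_i∂_j f^k` and
the Vessiot structure equations of the affine structure:
`∂_i Φ^k_{lj} − ∂_j Φ^k_{li} + Σ_r (Φ^r_{lj}Φ^k_{ri} − Φ^r_{li}Φ^k_{rj}) = 0` on `U`. -/
theorem stmt15 (n : ℕ) (U : Set (Fin n → ℝ)) (hU : IsOpen U)
    (f : (Fin n → ℝ) → (Fin n → ℝ))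
    (hf : ∀ k, ContDiffOn ℝ 3 (fun x => f x k) U)
    (J : (Fin n → ℝ) → Matrix (Fin n) (Fin n) ℝ)
    (hJ : ∀ x k i, J x k i = pd i (fun y => f y k) x)
    (hJinv : ∀ x ∈ U, IsUnit (J x)) :
    let Φ : Fin n → Fin n → Fin n → (Fin n → ℝ) → ℝ := fun k i j y =>
      ∑ m, (J y)⁻¹ k m * pd i (fun z => pd j (fun w => f w m) z) y
    (∀ x ∈ U, ∀ i j k : Fin n,
      (∑ r, pd r (fun y => f y k) x * Φ r i j x)
        = pd i (fun z => pd j (fun w => f w k) z) x) ∧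
    (∀ x ∈ U, ∀ i j k l : Fin n,
      pd i (Φ k l j) x - pd j (Φ k l i) x
        + ∑ r, (Φ r l j x * Φ k r i x - Φ r l i x * Φ k r j x) = 0) := by
  intro Φ
  -- first derivatives are C²
  have hf1 : ∀ k j, ContDiffOn ℝ 2 (fun y => pd j (fun w => f w k) y) U := by
    intro k j
    simp only [pd]
    exact ((hf k).fderiv_of_isOpen hU (by norm_num)).clm_apply contDiffOn_const
  -- second derivatives are C¹
  have hf2 : ∀ k i j,
      ContDiffOn ℝ 1 (fun y => pd i (fun z => pd j (fun w => f w k) z) y) U := by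
    intro k i j
    simp only [pd]
    exact ((hf1 k j).fderiv_of_isOpen hU (by norm_num)).clm_apply contDiffOn_const
  have hdiff1 : ∀ x ∈ U, ∀ k j, DifferentiableAt ℝ (fun y => pd j (fun w => f w k) y) x :=
    fun x hx k j =>
      ((hf1 k j).differentiableOn two_ne_zero).differentiableAt (hU.mem_nhds hx)
  have hdiff2 : ∀ x ∈ U, ∀ k i j,
      DifferentiableAt ℝ (fun y => pd i (fun z => pd j (fun w => f w k) z) y) x :=
    fun x hx k i j =>
      ((hf2 k i j).differentiableOn one_ne_zero).differentiableAt (hU.mem_nhds hx)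
  -- symmetry of second derivatives
  have hgsym : ∀ x ∈ U, ∀ k i j,
      pd i (fun z => pd j (fun w => f w k) z) x = pd j (fun z => pd i (fun w => f w k) z) x := by
    intro x hx k i j
    exact pd_comm (((hf k).contDiffAt (hU.mem_nhds hx)).of_le (by norm_num)) i j
  have hdet : ∀ x ∈ U, (J x).det ≠ 0 := fun x hx =>
    ((Matrix.isUnit_iff_isUnit_det _).1 (hJinv x hx)).ne_zero
  have hJd : ∀ x ∈ U, ∀ k r, DifferentiableAt ℝ (fun y => J y k r) x := by
    intro x hx k r
    have hrw : (fun y => J y k r) = fun y => pd r (fun w => f w k) y :=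
      funext fun y => hJ y k r
    rw [hrw]; exact hdiff1 x hx k r
  have hinvd : ∀ x ∈ U, ∀ k m, DifferentiableAt ℝ (fun y => (J y)⁻¹ k m) x :=
    fun x hx k m => differentiableAt_inv_entry (hJd x hx) (hdet x hx) k m
  have hΦd : ∀ x ∈ U, ∀ k i j, DifferentiableAt ℝ (Φ k i j) x := by
    intro x hx k i j
    exact DifferentiableAt.fun_sum fun m _ => (hinvd x hx k m).mul (hdiff2 x hx m i j)
  -- Part 1
  have hpart1 : ∀ x ∈ U, ∀ i j k : Fin n,
      (∑ r, pd r (fun y => f y k) x * Φ r i j x)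
        = pd i (fun z => pd j (fun w => f w k) z) x := by
    intro x hx i j k
    have hJJ : J x * (J x)⁻¹ = 1 :=
      Matrix.mul_nonsing_inv _ ((Matrix.isUnit_iff_isUnit_det _).1 (hJinv x hx))
    calc ∑ r, pd r (fun y => f y k) x * Φ r i j x
        = ∑ r, ∑ m, J x k r * ((J x)⁻¹ r m
            * pd i (fun z => pd j (fun w => f w m) z) x) := by
          refine Finset.sum_congr rfl fun r _ => ?_
          rw [← hJ x k r, Finset.mul_sum]
      _ = ∑ m, ∑ r, J x k r * ((J x)⁻¹ r m
            * pd i (fun z => pd j (fun w => f w m) z) x) := Finset.sum_comm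
      _ = ∑ m, (J x * (J x)⁻¹) k m * pd i (fun z => pd j (fun w => f w m) z) x := by
          refine Finset.sum_congr rfl fun m _ => ?_
          rw [Matrix.mul_apply, Finset.sum_mul]
          exact Finset.sum_congr rfl fun r _ => by ring
      _ = pd i (fun z => pd j (fun w => f w k) z) x := by
          rw [hJJ]
          simp [Matrix.one_apply]
  refine ⟨hpart1, ?_⟩
  -- Part 2
  intro x hx i j k l
  -- third-derivative symmetry
  have h3 : ∀ k' i' j' : Fin n,
      pd i' (fun z => pd l (fun z' => pd j' (fun w => f w k') z') z) x
        = pd j' (fun z => pd l (fun z' => pd i' (fun w => f w k') z') z) x := by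
    intro k' i' j'
    have hC2 : ContDiffAt ℝ 2 (fun z => pd l (fun w => f w k') z) x :=
      (hf1 k' l).contDiffAt (hU.mem_nhds hx)
    have e1 : (fun z => pd l (fun z' => pd j' (fun w => f w k') z') z)
        =ᶠ[𝓝 x] (fun z => pd j' (fun z' => pd l (fun w => f w k') z') z) :=
      Filter.eventuallyEq_of_mem (hU.mem_nhds hx) fun y hy => hgsym y hy k' l j'
    have e2 : (fun z => pd i' (fun z' => pd l (fun w => f w k') z') z)
        =ᶠ[𝓝 x] (fun z => pd l (fun z' => pd i' (fun w => f w k') z') z) :=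
      Filter.eventuallyEq_of_mem (hU.mem_nhds hx) fun y hy => hgsym y hy k' i' l
    rw [pd_congr e1, pd_comm hC2 i' j', ← pd_congr e2]
  -- product-rule identity
  have hE1 : ∀ k' i' j' : Fin n,
      ∑ r, J x k' r * pd i' (Φ r l j') x
        = pd i' (fun z => pd l (fun z' => pd j' (fun w => f w k') z') z) x
          - ∑ r, pd i' (fun z => pd r (fun w => f w k') z) x * Φ r l j' x := by
    intro k' i' j'
    have hS : (fun y => ∑ r, pd r (fun w => f w k') y * Φ r l j' y)
        =ᶠ[𝓝 x] (fun y => pd l (fun z' => pd j' (fun w => f w k') z') y) :=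
      Filter.eventuallyEq_of_mem (hU.mem_nhds hx) fun y hy => hpart1 y hy l j' k'
    have hpd : pd i' (fun y => ∑ r, pd r (fun w => f w k') y * Φ r l j' y) x
        = pd i' (fun z => pd l (fun z' => pd j' (fun w => f w k') z') z) x := pd_congr hS
    rw [pd_sum Finset.univ
        (fun r _ => (hdiff1 x hx k' r).fun_mul (hΦd x hx r l j'))] at hpd
    have hterm : ∀ r : Fin n,
        pd i' (fun y => pd r (fun w => f w k') y * Φ r l j' y) x
          = pd i' (fun z => pd r (fun w => f w k') z) x * Φ r l j' x
            + pd r (fun w => f w k') x * pd i' (Φ r l j') x :=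
      fun r => pd_mul (hdiff1 x hx k' r) (hΦd x hx r l j')
    rw [Finset.sum_congr rfl fun r _ => hterm r, Finset.sum_add_distrib] at hpd
    have hJr : ∑ r, J x k' r * pd i' (Φ r l j') x
        = ∑ r, pd r (fun w => f w k') x * pd i' (Φ r l j') x :=
      Finset.sum_congr rfl fun r _ => by rw [hJ]
    rw [hJr]
    linarith [hpd]
  -- contraction identity
  have hE3 : ∀ k' i' s : Fin n,
      ∑ r, J x k' r * Φ r s i' x = pd i' (fun z => pd s (fun w => f w k') z) x := by
    intro k' i' s
    calc ∑ r, J x k' r * Φ r s i' x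
        = ∑ r, pd r (fun y => f y k') x * Φ r s i' x :=
          Finset.sum_congr rfl fun r _ => by rw [hJ]
      _ = pd s (fun z => pd i' (fun w => f w k') z) x := hpart1 x hx s i' k'
      _ = pd i' (fun z => pd s (fun w => f w k') z) x := hgsym x hx k' s i'
  set v : Fin n → ℝ := fun r =>
    pd i (Φ r l j) x - pd j (Φ r l i) x
      + ∑ s, (Φ s l j x * Φ r s i x - Φ s l i x * Φ r s j x) with hv_def
  have hswap : ∀ (k' : Fin n) (A B : Fin n → ℝ) (P Q : Fin n → Fin n → ℝ),
      (∑ r, J x k' r * ∑ s, (A s * P r s - B s * Q r s))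
        = (∑ s, A s * ∑ r, J x k' r * P r s) - ∑ s, B s * ∑ r, J x k' r * Q r s := by
    intro k' A B P Q
    rw [show (∑ r, J x k' r * ∑ s, (A s * P r s - B s * Q r s))
        = ∑ r, ∑ s, (A s * (J x k' r * P r s) - B s * (J x k' r * Q r s)) from
      Finset.sum_congr rfl fun r _ => by
        rw [Finset.mul_sum]; exact Finset.sum_congr rfl fun s _ => by ring]
    rw [Finset.sum_comm, ← Finset.sum_sub_distrib]
    refine Finset.sum_congr rfl fun s _ => ?_
    rw [Finset.sum_sub_distrib, Finset.mul_sum, Finset.mul_sum]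
  have hv0 : ∀ k' : Fin n, ∑ r, J x k' r * v r = 0 := by
    intro k'
    have step1 : ∑ r, J x k' r * v r
        = (∑ r, J x k' r * pd i (Φ r l j) x) - (∑ r, J x k' r * pd j (Φ r l i) x)
          + ∑ r, J x k' r * ∑ s, (Φ s l j x * Φ r s i x - Φ s l i x * Φ r s j x) := by
      simp only [hv_def, mul_add, mul_sub, Finset.sum_add_distrib, Finset.sum_sub_distrib]
    rw [step1, hE1 k' i j, hE1 k' j i,
      hswap k' (fun s => Φ s l j x) (fun s => Φ s l i x)
        (fun r s => Φ r s i x) (fun r s => Φ r s j x)]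
    simp only [hE3 k']
    have hc1 : ∑ s, Φ s l j x * pd i (fun z => pd s (fun w => f w k') z) x
        = ∑ r, pd i (fun z => pd r (fun w => f w k') z) x * Φ r l j x :=
      Finset.sum_congr rfl fun s _ => mul_comm _ _
    have hc2 : ∑ s, Φ s l i x * pd j (fun z => pd s (fun w => f w k') z) x
        = ∑ r, pd j (fun z => pd r (fun w => f w k') z) x * Φ r l i x :=
      Finset.sum_congr rfl fun s _ => mul_comm _ _
    rw [hc1, hc2, h3 k' i j]
    ring
  have hmv : (J x) *ᵥ v = 0 := by
    funext k'
    simpa [Matrix.mulVec, dotProduct] using hv0 k'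
  have hvz : v = 0 := by
    have h1 : (J x)⁻¹ *ᵥ ((J x) *ᵥ v) = v := by
      rw [Matrix.mulVec_mulVec,
        Matrix.nonsing_inv_mul _ ((Matrix.isUnit_iff_isUnit_det _).1 (hJinv x hx)),
        Matrix.one_mulVec]
    rw [hmv, Matrix.mulVec_zero] at h1
    exact h1.symm
  exact congrFun hvz k
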